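/- Let f : ℝⁿ → ℝ≥0∞ be upper semicontinuous with a nonempty compact level set {f ≥ α}, and let f^ν hypo-converge to f with each f^ν upper semicontinuous and the family {f ≥ α(f^ν)} eventually uniformly bounded (all θ^ν ∈ argmax f^ν lie in a fixed compact set K for large ν). If θ^ν maximizes f^ν for each ν and θ^{ν_k} → θ̃, then lim_ν sup f^ν = sup f and θ̃ maximizes f. -/

import Mathlib

open MeasureTheory Filter Topology Metric Set
open scoped ENNReal NNReal

theorem stmt10 {n : ℕ} (f : EuclideanSpace ℝ (Fin n) → ℝ≥0∞)
    (fν : ℕ → EuclideanSpace ℝ (Fin n) → ℝ≥0∞)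
    (husc : UpperSemicontinuous f) (huscν : ∀ ν, UpperSemicontinuous (fν ν))
    (hhypo : ∀ x : EuclideanSpace ℝ (Fin n),
      (∀ xs : ℕ → EuclideanSpace ℝ (Fin n), Tendsto xs atTop (𝓝 x) →
        limsup (fun ν => fν ν (xs ν)) atTop ≤ f x) ∧
      (∃ xs : ℕ → EuclideanSpace ℝ (Fin n), Tendsto xs atTop (𝓝 x) ∧
        f x ≤ liminf (fun ν => fν ν (xs ν)) atTop))
    (α : ℝ≥0∞) (hcpt : IsCompact {x | α ≤ f x}) (hne : {x | α ≤ f x}.Nonempty)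
    (θs : ℕ → EuclideanSpace ℝ (Fin n)) (hmax : ∀ ν x, fν ν x ≤ fν ν (θs ν))
    (K : Set (EuclideanSpace ℝ (Fin n))) (hK : IsCompact K)
    (hKev : ∀ᶠ ν in atTop, θs ν ∈ K)
    (φ : ℕ → ℕ) (hφ : StrictMono φ) (θt : EuclideanSpace ℝ (Fin n))
    (hconv : Tendsto (θs ∘ φ) atTop (𝓝 θt)) :
    Tendsto (fun ν => ⨆ x, fν ν x) atTop (𝓝 (⨆ x, f x)) ∧ ∀ x, f x ≤ f θt := by
  set g : ℕ → ℝ≥0∞ := fun ν => fν ν (θs ν) with hg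
  -- the supremum of `fν ν` is attained at `θs ν`
  have hfun : (fun ν => ⨆ x, fν ν x) = g :=
    funext fun ν => le_antisymm (iSup_le (hmax ν)) (le_iSup (fν ν) (θs ν))
  -- key: along any sequence of indices tending to infinity with converging maximizers,
  -- the limsup of the max values is at most `f` of the limit point
  have key : ∀ u : ℕ → ℕ, Tendsto u atTop atTop →
      ∀ θ' : EuclideanSpace ℝ (Fin n), Tendsto (fun k => θs (u k)) atTop (𝓝 θ') →
      limsup (fun k => g (u k)) atTop ≤ f θ' := by
    intro u hu θ' hc
    classical
    set xs : ℕ → EuclideanSpace ℝ (Fin n) :=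
      fun ν => if ν ∈ Set.range u then θs ν else θ' with hxsdef
    have hxs : Tendsto xs atTop (𝓝 θ') := by
      intro s hs
      rw [mem_map, mem_atTop_sets]
      obtain ⟨N, hN⟩ := eventually_atTop.1 (hc.eventually_mem hs)
      refine ⟨(Finset.range N).sup u + 1, fun ν hν => ?_⟩
      show xs ν ∈ s
      by_cases h : ν ∈ Set.range u
      · obtain ⟨k, hk⟩ := h
        have hkN : N ≤ k := by
          by_contra hlt
          push_neg at hlt
          have : u k ≤ (Finset.range N).sup u :=
            Finset.le_sup (Finset.mem_range.2 hlt)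
          omega
        show (if ν ∈ Set.range u then θs ν else θ') ∈ s
        rw [if_pos (Set.mem_range.2 ⟨k, hk⟩), ← hk]
        exact hN k hkN
      · show (if ν ∈ Set.range u then θs ν else θ') ∈ s
        rw [if_neg h]
        exact mem_of_mem_nhds hs
    have h1 := (hhypo θ').1 xs hxs
    have heq : (fun k => g (u k)) = (fun ν => fν ν (xs ν)) ∘ u := by
      funext k
      simp [hg, hxsdef, Set.mem_range_self k]
    calc limsup (fun k => g (u k)) atTop
        = limsup (fun ν => fν ν (xs ν)) (map u atTop) := by
          rw [heq, limsup_comp]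
      _ ≤ limsup (fun ν => fν ν (xs ν)) atTop := limsup_le_limsup_of_le hu
      _ ≤ f θ' := h1
  -- the supremum of `f` is at most the liminf of the max values
  have hgl : (⨆ x, f x) ≤ liminf g atTop := by
    refine iSup_le fun x => ?_
    obtain ⟨xs, hxs, hx⟩ := (hhypo x).2
    exact hx.trans (liminf_le_liminf (Eventually.of_forall fun ν => hmax ν (xs ν)))
  -- liminf along subsequences dominates liminf
  have hsub : ∀ u : ℕ → ℕ, Tendsto u atTop atTop →
      (⨆ x, f x) ≤ liminf (fun k => g (u k)) atTop := by
    intro u hu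
    refine hgl.trans ?_
    have : liminf g atTop ≤ liminf g (map u atTop) := liminf_le_liminf_of_le hu
    rw [show (fun k => g (u k)) = g ∘ u from rfl, liminf_comp]
    exact this
  constructor
  · rw [hfun]
    refine tendsto_of_subseq_tendsto fun ns hns => ?_
    obtain ⟨θ', -, ms, hms, hcms⟩ :=
      hK.tendsto_subseq' ((hns.eventually hKev).frequently :
        ∃ᶠ k in atTop, θs (ns k) ∈ K)
    have hu : Tendsto (fun k => ns (ms k)) atTop atTop := hns.comp hms.tendsto_atTop
    refine ⟨ms, tendsto_of_le_liminf_of_limsup_le (hsub _ hu) ?_⟩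
    exact (key _ hu θ' hcms).trans (le_iSup f θ')
  · intro x
    have h2 : limsup (fun k => g (φ k)) atTop ≤ f θt := key φ hφ.tendsto_atTop θt hconv
    calc f x ≤ ⨆ x, f x := le_iSup f x
      _ ≤ liminf (fun k => g (φ k)) atTop := hsub φ hφ.tendsto_atTop
      _ ≤ limsup (fun k => g (φ k)) atTop := liminf_le_limsup
      _ ≤ f θt := h2
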